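/- For i = 1,2, let P̃ᵢ be an almost surely discrete random probability measure on X such that the mean measure E[P̃ᵢ] is atomless, and assume Var_k(P̃ᵢ) > 0. If the kernel k is c₀-universal, then Corr_k(P̃₁,P̃₂) = 1 if and only if P̃₁ = P̃₂ almost surely. -/

import Mathlib

open MeasureTheory ProbabilityTheory Filter
open scoped RealInnerProductSpace ENNReal NNReal

noncomputable section

/-- A positive-definite function `k`. -/
def IsPosDef {X : Type*} (k : X → X → ℝ) : Prop :=
  ∀ (n : ℕ) (x : Fin n → X) (c : Fin n → ℝ),
    0 ≤ ∑ i : Fin n, ∑ j : Fin n, c i * c j * k (x i) (x j)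

/-- A bounded, measurable, symmetric, positive-definite kernel. -/
structure IsKernel {X : Type*} [MeasurableSpace X] (k : X → X → ℝ) : Prop where
  measurable : Measurable (Function.uncurry k)
  bounded : ∃ C : ℝ, ∀ x y, |k x y| ≤ C
  symm : ∀ x y, k x y = k y x
  posDef : IsPosDef k

/-- A realization of the reproducing kernel Hilbert space of `k`: a Hilbert space together with
a feature map reproducing `k` whose feature vectors span a dense subspace. -/
structure FeatureMap {X : Type*} [MeasurableSpace X] (k : X → X → ℝ)
    (H : Type*) [NormedAddCommGroup H] [InnerProductSpace ℝ H] : Type _ where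
  toFun : X → H
  stronglyMeasurable : StronglyMeasurable toFun
  repro : ∀ x y, ⟪toFun x, toFun y⟫ = k x y
  dense_span : Dense (Submodule.span ℝ (Set.range toFun) : Set H)

/-- Kernel mean embedding of a measure, as a Bochner integral of the feature map. -/
def meanEmb {X : Type*} [MeasurableSpace X] {k : X → X → ℝ} {H : Type*}
    [NormedAddCommGroup H] [InnerProductSpace ℝ H] [CompleteSpace H]
    (F : FeatureMap k H) (μ : Measure X) : H :=
  ∫ x, F.toFun x ∂μ

/-- Kernel covariance of two random probability measures,
`Cov_k(P₁,P₂) = E[⟪μ_k(P₁) - E[μ_k(P₁)], μ_k(P₂) - E[μ_k(P₂)]⟫]`. -/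
def kerCov {X : Type*} [MeasurableSpace X] {k : X → X → ℝ} {H : Type*}
    [NormedAddCommGroup H] [InnerProductSpace ℝ H] [CompleteSpace H]
    {Ω : Type*} [MeasurableSpace Ω]
    (F : FeatureMap k H) (Pr : Measure Ω) (P₁ P₂ : Ω → Measure X) : ℝ :=
  ∫ ω, ⟪meanEmb F (P₁ ω) - ∫ ω', meanEmb F (P₁ ω') ∂Pr,
        meanEmb F (P₂ ω) - ∫ ω', meanEmb F (P₂ ω') ∂Pr⟫ ∂Pr

/-- Kernel variance of a random probability measure. -/
def kerVar {X : Type*} [MeasurableSpace X] {k : X → X → ℝ} {H : Type*}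
    [NormedAddCommGroup H] [InnerProductSpace ℝ H] [CompleteSpace H]
    {Ω : Type*} [MeasurableSpace Ω]
    (F : FeatureMap k H) (Pr : Measure Ω) (P : Ω → Measure X) : ℝ :=
  kerCov F Pr P P

/-- Kernel correlation of two random probability measures. -/
def kerCorr {X : Type*} [MeasurableSpace X] {k : X → X → ℝ} {H : Type*}
    [NormedAddCommGroup H] [InnerProductSpace ℝ H] [CompleteSpace H]
    {Ω : Type*} [MeasurableSpace Ω]
    (F : FeatureMap k H) (Pr : Measure Ω) (P₁ P₂ : Ω → Measure X) : ℝ :=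
  kerCov F Pr P₁ P₂ / (Real.sqrt (kerVar F Pr P₁) * Real.sqrt (kerVar F Pr P₂))

/-- Covariance of two real random variables. -/
def rCov {Ω : Type*} [MeasurableSpace Ω] (Pr : Measure Ω) (U V : Ω → ℝ) : ℝ :=
  ∫ ω, (U ω - ∫ ω', U ω' ∂Pr) * (V ω - ∫ ω', V ω' ∂Pr) ∂Pr

/-- Variance of a real random variable. -/
def rVar {Ω : Type*} [MeasurableSpace Ω] (Pr : Measure Ω) (U : Ω → ℝ) : ℝ :=
  rCov Pr U U

/-- Pearson correlation of two real random variables. -/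
def rCorr {Ω : Type*} [MeasurableSpace Ω] (Pr : Measure Ω) (U V : Ω → ℝ) : ℝ :=
  rCov Pr U V / (Real.sqrt (rVar Pr U) * Real.sqrt (rVar Pr V))

end

noncomputable section

/-- A kernel vanishes at infinity (is `c₀`). -/
def IsC0Kernel {Z : Type*} [TopologicalSpace Z] (k : Z → Z → ℝ) : Prop :=
  ∀ ε : ℝ, 0 < ε → ∀ y : Z, IsCompact {x : Z | ε ≤ |k x y|}

/-- The kernel mean embedding of a bounded signed measure,
`μ_k(ξ)(y) = ∫ k(x,y) dξ(x)`, via the Jordan decomposition. -/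
def signedMeanEmb {Z : Type*} [MeasurableSpace Z] (k : Z → Z → ℝ)
    (ξ : SignedMeasure Z) : Z → ℝ := fun y =>
  (∫ x, k x y ∂ξ.toJordanDecomposition.posPart)
    - ∫ x, k x y ∂ξ.toJordanDecomposition.negPart

/-- A kernel is `c₀`-universal if it is `c₀` and its kernel mean embedding is injective
on the space of bounded signed measures. -/
def IsC0Universal {Z : Type*} [TopologicalSpace Z] [MeasurableSpace Z]
    (k : Z → Z → ℝ) : Prop :=
  IsC0Kernel k ∧ Function.Injective (signedMeanEmb k)

/-- A measure is discrete (purely atomic) if it is carried by a countable set. -/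
def IsDiscreteMeasure {Z : Type*} [MeasurableSpace Z] (μ : Measure Z) : Prop :=
  ∃ S : Set Z, S.Countable ∧ μ Sᶜ = 0

section AuxLemmas

variable {X : Type*} [MeasurableSpace X] {k : X → X → ℝ}
variable {H : Type*} [NormedAddCommGroup H] [InnerProductSpace ℝ H] [CompleteSpace H]

lemma aux_k_meas (hk : IsKernel k) (y : X) : Measurable fun x => k x y :=
  hk.measurable.comp (measurable_id.prodMk measurable_const)

lemma aux_k_int (hk : IsKernel k) (μ : Measure X) [IsFiniteMeasure μ] (y : X) :
    Integrable (fun x => k x y) μ := by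
  obtain ⟨C, hC⟩ := hk.bounded
  exact ⟨(aux_k_meas hk y).aestronglyMeasurable,
    HasFiniteIntegral.of_bounded (C := C) (Filter.Eventually.of_forall fun x => by
      simpa [Real.norm_eq_abs] using hC x y)⟩

lemma aux_F_bound (hk : IsKernel k) (F : FeatureMap k H) :
    ∃ B : ℝ, 0 ≤ B ∧ ∀ x, ‖F.toFun x‖ ≤ B := by
  obtain ⟨C, hC⟩ := hk.bounded
  refine ⟨Real.sqrt C, Real.sqrt_nonneg C, fun x => ?_⟩
  have h1 : ‖F.toFun x‖ ^ 2 = k x x := by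
    rw [← F.repro x x, real_inner_self_eq_norm_sq]
  have h2 : ‖F.toFun x‖ = Real.sqrt (k x x) := by
    rw [← h1, Real.sqrt_sq (norm_nonneg _)]
  rw [h2]
  exact Real.sqrt_le_sqrt ((le_abs_self _).trans (hC x x))

lemma aux_F_int (hk : IsKernel k) (F : FeatureMap k H) (μ : Measure X) [IsFiniteMeasure μ] :
    Integrable F.toFun μ := by
  obtain ⟨B, _, hB⟩ := aux_F_bound hk F
  exact ⟨F.stronglyMeasurable.aestronglyMeasurable,
    HasFiniteIntegral.of_bounded (Filter.Eventually.of_forall hB)⟩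

lemma aux_meanEmb_inner (hk : IsKernel k) (F : FeatureMap k H) (μ : Measure X)
    [IsFiniteMeasure μ] (y : X) :
    ⟪meanEmb F μ, F.toFun y⟫ = ∫ x, k x y ∂μ := by
  rw [real_inner_comm, meanEmb, ← integral_inner (aux_F_int hk F μ) (F.toFun y)]
  refine integral_congr_ae (Filter.Eventually.of_forall fun x => ?_)
  show ⟪F.toFun y, F.toFun x⟫ = k x y
  rw [real_inner_comm, F.repro]

lemma aux_signedMeanEmb_zero {Z : Type*} [MeasurableSpace Z] (k' : Z → Z → ℝ) :
    signedMeanEmb k' (0 : SignedMeasure Z) = 0 := by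
  funext y
  simp [signedMeanEmb, MeasureTheory.SignedMeasure.toJordanDecomposition_zero]

lemma aux_signedMeanEmb_sub (hk : IsKernel k) (μ ν : Measure X)
    [IsFiniteMeasure μ] [IsFiniteMeasure ν] (y : X) :
    signedMeanEmb k (μ.toSignedMeasure - ν.toSignedMeasure) y
      = (∫ x, k x y ∂μ) - ∫ x, k x y ∂ν := by
  set ξ : SignedMeasure X := μ.toSignedMeasure - ν.toSignedMeasure with hξ
  set p := ξ.toJordanDecomposition.posPart with hp
  set n := ξ.toJordanDecomposition.negPart with hn
  have h1 : p.toSignedMeasure - n.toSignedMeasure = μ.toSignedMeasure - ν.toSignedMeasure :=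
    ξ.toSignedMeasure_toJordanDecomposition
  have h2 : (p + ν).toSignedMeasure = (μ + n).toSignedMeasure := by
    rw [Measure.toSignedMeasure_add, Measure.toSignedMeasure_add]
    exact sub_eq_sub_iff_add_eq_add.mp h1
  have h3 : p + ν = μ + n := Measure.toSignedMeasure_eq_toSignedMeasure_iff.mp h2
  have h4 : (∫ x, k x y ∂p) + ∫ x, k x y ∂ν = (∫ x, k x y ∂μ) + ∫ x, k x y ∂n := by
    rw [← integral_add_measure (aux_k_int hk p y) (aux_k_int hk ν y),
      ← integral_add_measure (aux_k_int hk μ y) (aux_k_int hk n y), h3]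
  have h5 : signedMeanEmb k ξ y = (∫ x, k x y ∂p) - ∫ x, k x y ∂n := rfl
  rw [h5]
  linarith

lemma aux_bind_prob {Ω : Type*} [MeasurableSpace Ω] (Pr : Measure Ω) [IsProbabilityMeasure Pr]
    (P : Ω → Measure X) (hPm : Measurable P) (hP : ∀ ω, IsProbabilityMeasure (P ω)) :
    IsProbabilityMeasure (Pr.bind P) := by
  constructor
  rw [Measure.bind_apply MeasurableSet.univ hPm.aemeasurable]
  simp only [fun ω => (hP ω).measure_univ]
  simp

lemma aux_integral_bind {Ω : Type*} [MeasurableSpace Ω] (Pr : Measure Ω)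
    [IsProbabilityMeasure Pr]
    (P : Ω → Measure X) (hPm : Measurable P) (hP : ∀ ω, IsProbabilityMeasure (P ω))
    {f : X → ℝ} (hf : Measurable f) {C : ℝ} (hC : ∀ x, |f x| ≤ C) :
    ∫ x, f x ∂(Pr.bind P) = ∫ ω, ∫ x, f x ∂(P ω) ∂Pr := by
  haveI := aux_bind_prob Pr P hPm hP
  -- replace the bound by a nonnegative one
  have hC' : ∀ x, |f x| ≤ |C| := fun x => (hC x).trans (le_abs_self C)
  have hfp : Measurable fun x => ENNReal.ofReal (f x) := ENNReal.measurable_ofReal.comp hf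
  have hfn : Measurable fun x => ENNReal.ofReal (-f x) := ENNReal.measurable_ofReal.comp hf.neg
  set g : Ω → ℝ≥0∞ := fun ω => ∫⁻ x, ENNReal.ofReal (f x) ∂(P ω) with hgdef
  set g' : Ω → ℝ≥0∞ := fun ω => ∫⁻ x, ENNReal.ofReal (-f x) ∂(P ω) with hg'def
  let κ : ProbabilityTheory.Kernel Ω X := ⟨P, hPm⟩
  haveI : ProbabilityTheory.IsMarkovKernel κ := ⟨hP⟩
  have hg_meas : Measurable g := Measurable.lintegral_kernel (κ := κ) hfp
  have hg'_meas : Measurable g' := Measurable.lintegral_kernel (κ := κ) hfn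
  have hgb : ∀ ω, g ω ≤ ENNReal.ofReal |C| := by
    intro ω
    haveI := hP ω
    calc g ω ≤ ∫⁻ _, ENNReal.ofReal |C| ∂(P ω) :=
          lintegral_mono fun x => ENNReal.ofReal_le_ofReal ((le_abs_self _).trans (hC' x))
      _ = ENNReal.ofReal |C| := by simp
  have hg'b : ∀ ω, g' ω ≤ ENNReal.ofReal |C| := by
    intro ω
    haveI := hP ω
    calc g' ω ≤ ∫⁻ _, ENNReal.ofReal |C| ∂(P ω) :=
          lintegral_mono fun x => ENNReal.ofReal_le_ofReal ((neg_le_abs _).trans (hC' x))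
      _ = ENNReal.ofReal |C| := by simp
  have hfint : ∀ (μ : Measure X) [IsFiniteMeasure μ], Integrable f μ := fun μ _ =>
    ⟨hf.aestronglyMeasurable,
      HasFiniteIntegral.of_bounded (C := |C|) (Filter.Eventually.of_forall fun x => by
        simpa [Real.norm_eq_abs] using hC' x)⟩
  have hint_g : Integrable (fun ω => (g ω).toReal) Pr := by
    refine ⟨hg_meas.ennreal_toReal.aestronglyMeasurable,
      HasFiniteIntegral.of_bounded (C := |C|) (Filter.Eventually.of_forall fun ω => ?_)⟩
    rw [Real.norm_eq_abs, abs_of_nonneg ENNReal.toReal_nonneg]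
    exact ENNReal.toReal_le_of_le_ofReal (abs_nonneg C) (hgb ω)
  have hint_g' : Integrable (fun ω => (g' ω).toReal) Pr := by
    refine ⟨hg'_meas.ennreal_toReal.aestronglyMeasurable,
      HasFiniteIntegral.of_bounded (C := |C|) (Filter.Eventually.of_forall fun ω => ?_)⟩
    rw [Real.norm_eq_abs, abs_of_nonneg ENNReal.toReal_nonneg]
    exact ENNReal.toReal_le_of_le_ofReal (abs_nonneg C) (hg'b ω)
  have key_g : ∫ ω, (g ω).toReal ∂Pr = (∫⁻ x, ENNReal.ofReal (f x) ∂(Pr.bind P)).toReal := by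
    rw [Measure.lintegral_bind hPm.aemeasurable hfp.aemeasurable]
    exact integral_toReal hg_meas.aemeasurable (Filter.Eventually.of_forall fun ω =>
      lt_of_le_of_lt (hgb ω) ENNReal.ofReal_lt_top)
  have key_g' : ∫ ω, (g' ω).toReal ∂Pr = (∫⁻ x, ENNReal.ofReal (-f x) ∂(Pr.bind P)).toReal := by
    rw [Measure.lintegral_bind hPm.aemeasurable hfn.aemeasurable]
    exact integral_toReal hg'_meas.aemeasurable (Filter.Eventually.of_forall fun ω =>
      lt_of_le_of_lt (hg'b ω) ENNReal.ofReal_lt_top)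
  calc ∫ x, f x ∂(Pr.bind P)
      = (∫⁻ x, ENNReal.ofReal (f x) ∂(Pr.bind P)).toReal
        - (∫⁻ x, ENNReal.ofReal (-f x) ∂(Pr.bind P)).toReal :=
        integral_eq_lintegral_pos_part_sub_lintegral_neg_part (hfint _)
    _ = (∫ ω, (g ω).toReal ∂Pr) - ∫ ω, (g' ω).toReal ∂Pr := by rw [key_g, key_g']
    _ = ∫ ω, ((g ω).toReal - (g' ω).toReal) ∂Pr := (integral_sub hint_g hint_g').symm
    _ = ∫ ω, ∫ x, f x ∂(P ω) ∂Pr := by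
        refine integral_congr_ae (Filter.Eventually.of_forall fun ω => ?_)
        haveI := hP ω
        exact (integral_eq_lintegral_pos_part_sub_lintegral_neg_part (hfint _)).symm

lemma aux_meanEmb_meas {Ω : Type*} [MeasurableSpace Ω] (F : FeatureMap k H)
    (P : Ω → Measure X) (hPm : Measurable P) (hP : ∀ ω, IsProbabilityMeasure (P ω)) :
    StronglyMeasurable fun ω => meanEmb F (P ω) := by
  let κ : ProbabilityTheory.Kernel Ω X := ⟨P, hPm⟩
  haveI : ProbabilityTheory.IsMarkovKernel κ := ⟨hP⟩
  have h : StronglyMeasurable (Function.uncurry fun (_ : Ω) (x : X) => F.toFun x) :=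
    F.stronglyMeasurable.comp_measurable measurable_snd
  exact MeasureTheory.StronglyMeasurable.integral_kernel_prod_right (κ := κ) h

lemma aux_CS {Ω : Type*} [MeasurableSpace Ω] (Pr : Measure Ω)
    (u₁ u₂ : Ω → H) (h₁ : MemLp u₁ 2 Pr) (h₂ : MemLp u₂ 2 Pr)
    (h : ∫ ω, ⟪u₁ ω, u₂ ω⟫ ∂Pr
        = Real.sqrt (∫ ω, ⟪u₁ ω, u₁ ω⟫ ∂Pr) * Real.sqrt (∫ ω, ⟪u₂ ω, u₂ ω⟫ ∂Pr)) :
    ∀ᵐ ω ∂Pr, Real.sqrt (∫ ω', ⟪u₂ ω', u₂ ω'⟫ ∂Pr) • u₁ ω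
            = Real.sqrt (∫ ω', ⟪u₁ ω', u₁ ω'⟫ ∂Pr) • u₂ ω := by
  set U₁ : Lp H 2 Pr := h₁.toLp u₁ with hU₁
  set U₂ : Lp H 2 Pr := h₂.toLp u₂ with hU₂
  have e₁₂ : ⟪U₁, U₂⟫ = ∫ ω, ⟪u₁ ω, u₂ ω⟫ ∂Pr := by
    rw [L2.inner_def]
    refine integral_congr_ae ?_
    filter_upwards [h₁.coeFn_toLp, h₂.coeFn_toLp] with ω e1 e2
    rw [e1, e2]
  have e₁₁ : ⟪U₁, U₁⟫ = ∫ ω, ⟪u₁ ω, u₁ ω⟫ ∂Pr := by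
    rw [L2.inner_def]
    refine integral_congr_ae ?_
    filter_upwards [h₁.coeFn_toLp] with ω e1
    rw [e1]
  have e₂₂ : ⟪U₂, U₂⟫ = ∫ ω, ⟪u₂ ω, u₂ ω⟫ ∂Pr := by
    rw [L2.inner_def]
    refine integral_congr_ae ?_
    filter_upwards [h₂.coeFn_toLp] with ω e2
    rw [e2]
  have n₁ : Real.sqrt (∫ ω, ⟪u₁ ω, u₁ ω⟫ ∂Pr) = ‖U₁‖ := by
    rw [← e₁₁, real_inner_self_eq_norm_sq, Real.sqrt_sq (norm_nonneg _)]
  have n₂ : Real.sqrt (∫ ω, ⟪u₂ ω, u₂ ω⟫ ∂Pr) = ‖U₂‖ := by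
    rw [← e₂₂, real_inner_self_eq_norm_sq, Real.sqrt_sq (norm_nonneg _)]
  have hU : ‖U₂‖ • U₁ = ‖U₁‖ • U₂ := by
    rw [← inner_eq_norm_mul_iff_real, e₁₂, h, n₁, n₂]
  have hcoe : ∀ᵐ ω ∂Pr, ‖U₂‖ • u₁ ω = ‖U₁‖ • u₂ ω := by
    have c1 := Lp.coeFn_smul (‖U₂‖) U₁
    have c2 := Lp.coeFn_smul (‖U₁‖) U₂
    have c3 : ((‖U₂‖ • U₁ : Lp H 2 Pr) : Ω → H) =ᵐ[Pr] ((‖U₁‖ • U₂ : Lp H 2 Pr) : Ω → H) := by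
      rw [hU]
    filter_upwards [c1, c2, c3, h₁.coeFn_toLp, h₂.coeFn_toLp] with ω k1 k2 k3 k4 k5
    have := k1.symm.trans (k3.trans k2)
    rw [Pi.smul_apply, Pi.smul_apply] at this
    rw [← k4, ← k5]
    exact this
  filter_upwards [hcoe] with ω hω
  rw [n₁, n₂]
  exact hω

end AuxLemmas

theorem stmt_5
    {X : Type*} [TopologicalSpace X] [PolishSpace X] [LocallyCompactSpace X]
    [MeasurableSpace X] [BorelSpace X]
    {k : X → X → ℝ} (hk : IsKernel k) (hk0 : IsC0Universal k)
    {H : Type*} [NormedAddCommGroup H] [InnerProductSpace ℝ H] [CompleteSpace H]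
    (F : FeatureMap k H)
    {Ω : Type*} [MeasurableSpace Ω] (Pr : Measure Ω) [IsProbabilityMeasure Pr]
    (P₁ P₂ : Ω → Measure X)
    (hP₁ : ∀ ω, IsProbabilityMeasure (P₁ ω)) (hP₂ : ∀ ω, IsProbabilityMeasure (P₂ ω))
    (hP₁m : Measurable P₁) (hP₂m : Measurable P₂)
    -- almost surely discrete random probabilities
    (hd₁ : ∀ᵐ ω ∂Pr, IsDiscreteMeasure (P₁ ω))
    (hd₂ : ∀ᵐ ω ∂Pr, IsDiscreteMeasure (P₂ ω))
    -- atomless mean measures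
    (ha₁ : ∀ z : X, Pr.bind P₁ {z} = 0) (ha₂ : ∀ z : X, Pr.bind P₂ {z} = 0)
    (hV₁ : 0 < kerVar F Pr P₁) (hV₂ : 0 < kerVar F Pr P₂) :
    kerCorr F Pr P₁ P₂ = 1 ↔ ∀ᵐ ω ∂Pr, P₁ ω = P₂ ω := by
  classical
  obtain ⟨B, hB0, hB⟩ := aux_F_bound hk F
  haveI hbp₁ := aux_bind_prob Pr P₁ hP₁m hP₁
  haveI hbp₂ := aux_bind_prob Pr P₂ hP₂m hP₂
  have hg₁m : StronglyMeasurable fun ω => meanEmb F (P₁ ω) := aux_meanEmb_meas F P₁ hP₁m hP₁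
  have hg₂m : StronglyMeasurable fun ω => meanEmb F (P₂ ω) := aux_meanEmb_meas F P₂ hP₂m hP₂
  have hgb₁ : ∀ ω, ‖meanEmb F (P₁ ω)‖ ≤ B := by
    intro ω; haveI := hP₁ ω
    have := norm_integral_le_of_norm_le_const (μ := P₁ ω) (f := F.toFun) (C := B)
      (Filter.Eventually.of_forall hB)
    simpa [meanEmb] using this
  have hgb₂ : ∀ ω, ‖meanEmb F (P₂ ω)‖ ≤ B := by
    intro ω; haveI := hP₂ ω
    have := norm_integral_le_of_norm_le_const (μ := P₂ ω) (f := F.toFun) (C := B)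
      (Filter.Eventually.of_forall hB)
    simpa [meanEmb] using this
  have hg₁i : Integrable (fun ω => meanEmb F (P₁ ω)) Pr :=
    ⟨hg₁m.aestronglyMeasurable, HasFiniteIntegral.of_bounded (Filter.Eventually.of_forall hgb₁)⟩
  have hg₂i : Integrable (fun ω => meanEmb F (P₂ ω)) Pr :=
    ⟨hg₂m.aestronglyMeasurable, HasFiniteIntegral.of_bounded (Filter.Eventually.of_forall hgb₂)⟩
  set m₁ : H := ∫ ω', meanEmb F (P₁ ω') ∂Pr with hm₁def
  set m₂ : H := ∫ ω', meanEmb F (P₂ ω') ∂Pr with hm₂def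
  set u₁ : Ω → H := fun ω => meanEmb F (P₁ ω) - m₁ with hu₁def
  set u₂ : Ω → H := fun ω => meanEmb F (P₂ ω) - m₂ with hu₂def
  have hcov : kerCov F Pr P₁ P₂ = ∫ ω, ⟪u₁ ω, u₂ ω⟫ ∂Pr := by
    rw [hu₁def, hu₂def, hm₁def, hm₂def]; rfl
  have hvar₁ : kerVar F Pr P₁ = ∫ ω, ⟪u₁ ω, u₁ ω⟫ ∂Pr := by
    rw [hu₁def, hm₁def]; rfl
  have hvar₂ : kerVar F Pr P₂ = ∫ ω, ⟪u₂ ω, u₂ ω⟫ ∂Pr := by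
    rw [hu₂def, hm₂def]; rfl
  have hu₁sm : StronglyMeasurable u₁ := by
    rw [hu₁def]; exact hg₁m.sub stronglyMeasurable_const
  have hu₂sm : StronglyMeasurable u₂ := by
    rw [hu₂def]; exact hg₂m.sub stronglyMeasurable_const
  have hub₁ : ∀ ω, ‖u₁ ω‖ ≤ B + ‖m₁‖ := fun ω => by
    rw [hu₁def]
    exact (norm_sub_le _ _).trans (add_le_add (hgb₁ ω) le_rfl)
  have hub₂ : ∀ ω, ‖u₂ ω‖ ≤ B + ‖m₂‖ := fun ω => by
    rw [hu₂def]
    exact (norm_sub_le _ _).trans (add_le_add (hgb₂ ω) le_rfl)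
  have hu₁L2 : MemLp u₁ 2 Pr :=
    MemLp.of_bound hu₁sm.aestronglyMeasurable _ (Filter.Eventually.of_forall hub₁)
  have hu₂L2 : MemLp u₂ 2 Pr :=
    MemLp.of_bound hu₂sm.aestronglyMeasurable _ (Filter.Eventually.of_forall hub₂)
  obtain ⟨C, hC⟩ := hk.bounded
  have hm₁y : ∀ y, ⟪m₁, F.toFun y⟫ = ∫ x, k x y ∂(Pr.bind P₁) := by
    intro y
    have e1 : ∫ ω, ⟪F.toFun y, meanEmb F (P₁ ω)⟫ ∂Pr = ⟪F.toFun y, m₁⟫ := by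
      rw [hm₁def]; exact integral_inner hg₁i (F.toFun y)
    have e2 : ∫ x, k x y ∂(Pr.bind P₁) = ∫ ω, ∫ x, k x y ∂(P₁ ω) ∂Pr :=
      aux_integral_bind Pr P₁ hP₁m hP₁ (aux_k_meas hk y) (fun x => hC x y)
    rw [real_inner_comm, ← e1, e2]
    refine integral_congr_ae (Filter.Eventually.of_forall fun ω => ?_)
    haveI := hP₁ ω
    show ⟪F.toFun y, meanEmb F (P₁ ω)⟫ = ∫ x, k x y ∂(P₁ ω)
    rw [real_inner_comm]
    exact aux_meanEmb_inner hk F (P₁ ω) y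
  have hm₂y : ∀ y, ⟪m₂, F.toFun y⟫ = ∫ x, k x y ∂(Pr.bind P₂) := by
    intro y
    have e1 : ∫ ω, ⟪F.toFun y, meanEmb F (P₂ ω)⟫ ∂Pr = ⟪F.toFun y, m₂⟫ := by
      rw [hm₂def]; exact integral_inner hg₂i (F.toFun y)
    have e2 : ∫ x, k x y ∂(Pr.bind P₂) = ∫ ω, ∫ x, k x y ∂(P₂ ω) ∂Pr :=
      aux_integral_bind Pr P₂ hP₂m hP₂ (aux_k_meas hk y) (fun x => hC x y)
    rw [real_inner_comm, ← e1, e2]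
    refine integral_congr_ae (Filter.Eventually.of_forall fun ω => ?_)
    haveI := hP₂ ω
    show ⟪F.toFun y, meanEmb F (P₂ ω)⟫ = ∫ x, k x y ∂(P₂ ω)
    rw [real_inner_comm]
    exact aux_meanEmb_inner hk F (P₂ ω) y
  constructor
  · -- forward direction
    intro h
    have hden : 0 < Real.sqrt (kerVar F Pr P₁) * Real.sqrt (kerVar F Pr P₂) :=
      mul_pos (Real.sqrt_pos.mpr hV₁) (Real.sqrt_pos.mpr hV₂)
    have hch : kerCov F Pr P₁ P₂
        = Real.sqrt (kerVar F Pr P₁) * Real.sqrt (kerVar F Pr P₂) := by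
      unfold kerCorr at h
      rwa [div_eq_one_iff_eq hden.ne'] at h
    have hkey := aux_CS Pr u₁ u₂ hu₁L2 hu₂L2
      (by rw [← hcov, ← hvar₁, ← hvar₂]; exact hch)
    have hkey' : ∀ᵐ ω ∂Pr, Real.sqrt (kerVar F Pr P₂) • u₁ ω
        = Real.sqrt (kerVar F Pr P₁) • u₂ ω := by
      rw [hvar₁, hvar₂]; exact hkey
    set c : ℝ := Real.sqrt (kerVar F Pr P₂) / Real.sqrt (kerVar F Pr P₁) with hcdef
    have hcpos : 0 < c := div_pos (Real.sqrt_pos.mpr hV₂) (Real.sqrt_pos.mpr hV₁)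
    set c' : ℝ≥0∞ := ENNReal.ofReal c with hc'def
    haveI hfin₁ : IsFiniteMeasure (c' • (Pr.bind P₁)) := by
      constructor
      rw [Measure.smul_apply, smul_eq_mul]
      exact ENNReal.mul_lt_top ENNReal.ofReal_lt_top (measure_lt_top _ _)
    filter_upwards [hkey', hd₁, hd₂] with ω hrel hD₁ hD₂
    haveI := hP₁ ω
    haveI := hP₂ ω
    haveI hfin₂ : IsFiniteMeasure (c' • (P₁ ω)) := by
      constructor
      rw [Measure.smul_apply, smul_eq_mul]
      exact ENNReal.mul_lt_top ENNReal.ofReal_lt_top (measure_lt_top _ _)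
    have hsV₁ : Real.sqrt (kerVar F Pr P₁) ≠ 0 := ne_of_gt (Real.sqrt_pos.mpr hV₁)
    have hrel2 : u₂ ω = c • u₁ ω := by
      apply smul_right_injective H hsV₁
      show Real.sqrt (kerVar F Pr P₁) • u₂ ω = Real.sqrt (kerVar F Pr P₁) • (c • u₁ ω)
      have hmulc : Real.sqrt (kerVar F Pr P₁) * c = Real.sqrt (kerVar F Pr P₂) := by
        rw [hcdef]; field_simp
      rw [smul_smul, hmulc]
      exact hrel.symm
    have hy : ∀ y, (∫ x, k x y ∂(P₂ ω)) - ∫ x, k x y ∂(Pr.bind P₂)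
        = c * ((∫ x, k x y ∂(P₁ ω)) - ∫ x, k x y ∂(Pr.bind P₁)) := by
      intro y
      have h1 : ⟪u₂ ω, F.toFun y⟫ = ⟪c • u₁ ω, F.toFun y⟫ := by rw [hrel2]
      have h2 : ⟪u₂ ω, F.toFun y⟫
          = (∫ x, k x y ∂(P₂ ω)) - ∫ x, k x y ∂(Pr.bind P₂) := by
        rw [hu₂def]
        show ⟪meanEmb F (P₂ ω) - m₂, F.toFun y⟫ = _
        rw [inner_sub_left, aux_meanEmb_inner hk F (P₂ ω) y, hm₂y y]
      have h3 : ⟪c • u₁ ω, F.toFun y⟫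
          = c * ((∫ x, k x y ∂(P₁ ω)) - ∫ x, k x y ∂(Pr.bind P₁)) := by
        rw [real_inner_smul_left, hu₁def]
        congr 1
        show ⟪meanEmb F (P₁ ω) - m₁, F.toFun y⟫ = _
        rw [inner_sub_left, aux_meanEmb_inner hk F (P₁ ω) y, hm₁y y]
      rw [← h2, h1, h3]
    -- use injectivity of the kernel mean embedding
    have hAeq : P₂ ω + c' • (Pr.bind P₁) = c' • (P₁ ω) + Pr.bind P₂ := by
      have hzero : signedMeanEmb k ((P₂ ω + c' • (Pr.bind P₁)).toSignedMeasure
          - (c' • (P₁ ω) + Pr.bind P₂).toSignedMeasure) = signedMeanEmb k 0 := by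
        rw [aux_signedMeanEmb_zero]
        funext y
        rw [aux_signedMeanEmb_sub hk _ _ y]
        have i1 : ∫ x, k x y ∂(P₂ ω + c' • (Pr.bind P₁))
            = (∫ x, k x y ∂(P₂ ω)) + c * ∫ x, k x y ∂(Pr.bind P₁) := by
          rw [integral_add_measure (aux_k_int hk _ y) (aux_k_int hk _ y),
            integral_smul_measure, hc'def, ENNReal.toReal_ofReal hcpos.le, smul_eq_mul]
        have i2 : ∫ x, k x y ∂(c' • (P₁ ω) + Pr.bind P₂)
            = c * (∫ x, k x y ∂(P₁ ω)) + ∫ x, k x y ∂(Pr.bind P₂) := by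
          rw [integral_add_measure (aux_k_int hk _ y) (aux_k_int hk _ y),
            integral_smul_measure, hc'def, ENNReal.toReal_ofReal hcpos.le, smul_eq_mul]
        rw [i1, i2]
        show _ = (0 : X → ℝ) y
        have := hy y
        simp only [Pi.zero_apply]
        linarith
      have h0 := hk0.2 hzero
      exact Measure.toSignedMeasure_eq_toSignedMeasure_iff.mp (sub_eq_zero.mp h0)
    -- discreteness and atomlessness
    obtain ⟨S₁, hS₁c, hS₁0⟩ := hD₁
    obtain ⟨S₂, hS₂c, hS₂0⟩ := hD₂
    set S : Set X := S₁ ∪ S₂ with hSdef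
    have hSc : S.Countable := hS₁c.union hS₂c
    have hSm : MeasurableSet S := hSc.measurableSet
    haveI : NullSingletonClass (Pr.bind P₁) := ⟨ha₁⟩
    haveI : NullSingletonClass (Pr.bind P₂) := ⟨ha₂⟩
    have hb₁S : Pr.bind P₁ S = 0 := hSc.measure_zero _
    have hb₂S : Pr.bind P₂ S = 0 := hSc.measure_zero _
    have hb₁Sc : Pr.bind P₁ Sᶜ = 1 := by
      rw [measure_compl hSm (measure_ne_top _ _), hb₁S, measure_univ]; simp
    have hb₂Sc : Pr.bind P₂ Sᶜ = 1 := by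
      rw [measure_compl hSm (measure_ne_top _ _), hb₂S, measure_univ]; simp
    have hP₁Sc : P₁ ω Sᶜ = 0 :=
      measure_mono_null (Set.compl_subset_compl.mpr Set.subset_union_left) hS₁0
    have hP₂Sc : P₂ ω Sᶜ = 0 :=
      measure_mono_null (Set.compl_subset_compl.mpr Set.subset_union_right) hS₂0
    have hc1 : c' = 1 := by
      have := congrArg (fun μ : Measure X => μ Sᶜ) hAeq
      simpa [Measure.add_apply, Measure.smul_apply, hP₁Sc, hP₂Sc, hb₁Sc, hb₂Sc,
        smul_eq_mul] using this
    refine Measure.ext fun E hE => ?_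
    have hb₁ES : Pr.bind P₁ (E ∩ S) = 0 := measure_mono_null Set.inter_subset_right hb₁S
    have hb₂ES : Pr.bind P₂ (E ∩ S) = 0 := measure_mono_null Set.inter_subset_right hb₂S
    have hES : P₂ ω (E ∩ S) = P₁ ω (E ∩ S) := by
      have := congrArg (fun μ : Measure X => μ (E ∩ S)) hAeq
      simpa [Measure.add_apply, Measure.smul_apply, hc1, hb₁ES, hb₂ES] using this
    have hE₁ : P₁ ω E = P₁ ω (E ∩ S) := by
      have hsplit := measure_inter_add_diff (μ := P₁ ω) E hSm
      have hd0 : P₁ ω (E \ S) = 0 :=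
        measure_mono_null (fun x hx => hx.2) hP₁Sc
      rw [hd0, add_zero] at hsplit
      exact hsplit.symm
    have hE₂ : P₂ ω E = P₂ ω (E ∩ S) := by
      have hsplit := measure_inter_add_diff (μ := P₂ ω) E hSm
      have hd0 : P₂ ω (E \ S) = 0 :=
        measure_mono_null (fun x hx => hx.2) hP₂Sc
      rw [hd0, add_zero] at hsplit
      exact hsplit.symm
    rw [hE₁, hE₂, hES]
  · -- converse direction
    intro h
    have hg : (fun ω => meanEmb F (P₁ ω)) =ᵐ[Pr] (fun ω => meanEmb F (P₂ ω)) := by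
      filter_upwards [h] with ω hω
      rw [hω]
    have hm : m₁ = m₂ := by
      rw [hm₁def, hm₂def]; exact integral_congr_ae hg
    have hu : u₁ =ᵐ[Pr] u₂ := by
      filter_upwards [h] with ω hω
      rw [hu₁def, hu₂def]
      show meanEmb F (P₁ ω) - m₁ = meanEmb F (P₂ ω) - m₂
      rw [hω, hm]
    have hcov2 : kerCov F Pr P₁ P₂ = kerVar F Pr P₁ := by
      rw [hcov, hvar₁]
      refine integral_congr_ae ?_
      filter_upwards [hu] with ω hω
      rw [hω]
    have hvar₂' : kerVar F Pr P₂ = kerVar F Pr P₁ := by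
      rw [hvar₁, hvar₂]
      refine integral_congr_ae ?_
      filter_upwards [hu] with ω hω
      rw [hω]
    unfold kerCorr
    rw [hcov2, hvar₂', Real.mul_self_sqrt hV₁.le]
    exact div_self (ne_of_gt hV₁)

end
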